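/- The HALS update is the exact solution of the single-column subproblem: let G = AᵀA with G(i,i) > 0, and fix a row index i of X. Then the row vector x* = [X(i,:) + ((AᵀB)(i,:) − G(i,:)X)/G(i,i)]₊ (projection of the unconstrained row update onto the nonnegative orthant) minimizes ‖AX' − B‖²_F over all nonnegative matrices X' that agree with X in every row except row i. -/

import Mathlib

open scoped Matrix

lemma hals_quad_min (G d c t : ℝ) (hG : 0 < G) (ht : 0 ≤ t) :
    2*(max 0 (c - d/G) - c)*d + (max 0 (c - d/G) - c)^2*G ≤
      2*(t-c)*d + (t-c)^2*G := by
  set u := d / G with hu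
  have hd : d = u * G := by rw [hu, div_mul_cancel₀ d hG.ne']
  rcases le_total 0 (c - u) with h | h
  · rw [max_eq_right h]
    nlinarith [sq_nonneg (t - c + u), hG.le, mul_nonneg (sq_nonneg (t - c + u)) hG.le]
  · rw [max_eq_left h]
    nlinarith [mul_nonneg (mul_nonneg ht (by linarith : (0:ℝ) ≤ 2*u + t - 2*c)) hG.le]

/-- The HALS row update exactly solves the single-row subproblem:
with `G = AᵀA`, `G i i > 0`, the row
`x* = [X(i,:) + ((AᵀB)(i,:) − G(i,:)X)/G(i,i)]₊` minimizes `‖AX' − B‖²_F`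
over nonnegative `X'` agreeing with `X` in every row except row `i`. -/
theorem hals_row_update_optimal
    (m n k : ℕ)
    (A : Matrix (Fin m) (Fin n) ℝ) (B : Matrix (Fin m) (Fin k) ℝ)
    (X : Matrix (Fin n) (Fin k) ℝ) (hX : ∀ i j, 0 ≤ X i j)
    (i : Fin n) (hG : 0 < (Aᵀ * A) i i)
    (xstar : Fin k → ℝ)
    (hxstar : ∀ j, xstar j =
      max 0 (X i j + ((Aᵀ * B) i j - (Aᵀ * A * X) i j) / (Aᵀ * A) i i)) :
    ∀ X' : Matrix (Fin n) (Fin k) ℝ,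
      (∀ i' j, 0 ≤ X' i' j) → (∀ i' j, i' ≠ i → X' i' j = X i' j) →
      ∑ a, ∑ j, ((A * X.updateRow i xstar - B) a j) ^ 2 ≤
        ∑ a, ∑ j, ((A * X' - B) a j) ^ 2 := by
  intro X' hpos hagree
  have hX'eq : X' = X.updateRow i (fun j => X' i j) := by
    ext i' j
    by_cases h : i' = i
    · subst h; simp [Matrix.updateRow_apply]
    · simp [Matrix.updateRow_apply, h, hagree i' j h]
  rw [hX'eq]
  -- expansion lemma
  have key : ∀ (x : Fin k → ℝ) (a : Fin m) (j : Fin k),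
      (A * X.updateRow i x - B) a j = (A * X - B) a j + A a i * (x j - X i j) := by
    intro x a j
    simp only [Matrix.sub_apply, Matrix.mul_apply, Matrix.updateRow_apply]
    have : ∀ l, A a l * (if l = i then x j else X l j)
        = A a l * X l j + (if l = i then A a i * (x j - X i j) else 0) := by
      intro l
      split
      · next hl => subst hl; ring
      · ring
    rw [Finset.sum_congr rfl (fun l _ => this l), Finset.sum_add_distrib,
      Finset.sum_ite_eq' Finset.univ i (fun _ => A a i * (x j - X i j))]
    simp; ring
  set Gv := (Aᵀ * A) i i with hGv
  have hGsum : Gv = ∑ a, A a i * A a i := by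
    simp [hGv, Matrix.mul_apply, Matrix.transpose_apply]
  set D : Fin k → ℝ := fun j => ∑ a, A a i * ((A * X - B) a j) with hD
  have hDval : ∀ j, D j = (Aᵀ * A * X) i j - (Aᵀ * B) i j := by
    intro j
    simp [hD, Matrix.mul_assoc, Matrix.mul_apply, Matrix.transpose_apply,
      Matrix.sub_apply, mul_sub, Finset.sum_sub_distrib, Finset.mul_sum,
      Finset.sum_mul, mul_assoc]
    rw [Finset.sum_comm]
  -- per-column expansion of the objective
  have expand : ∀ (x : Fin k → ℝ) (j : Fin k),
      ∑ a, ((A * X.updateRow i x - B) a j) ^ 2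
        = ∑ a, ((A * X - B) a j) ^ 2
          + (2*(x j - X i j)*(D j) + (x j - X i j)^2*Gv) := by
    intro x j
    simp only [key x]
    rw [hGsum, hD]
    rw [Finset.sum_congr rfl (fun a _ => by
      ring : ∀ a ∈ Finset.univ, ((A * X - B) a j + A a i * (x j - X i j)) ^ 2
        = ((A * X - B) a j)^2 + 2*(x j - X i j)*(A a i * ((A * X - B) a j))
          + (x j - X i j)^2*(A a i * A a i))]
    rw [Finset.sum_add_distrib, Finset.sum_add_distrib, add_assoc,
      ← Finset.mul_sum, ← Finset.mul_sum]
  rw [Finset.sum_comm, Finset.sum_comm (s := Finset.univ) (t := Finset.univ)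
    (f := fun a j => ((A * X.updateRow i (fun j => X' i j) - B) a j) ^ 2)]
  apply Finset.sum_le_sum
  intro j _
  rw [expand xstar j, expand (fun j => X' i j) j]
  have hx : xstar j = max 0 (X i j - D j / Gv) := by
    rw [hxstar j, hDval j]; ring_nf
  rw [hx]
  exact (add_le_add_iff_left _).mpr (hals_quad_min Gv (D j) (X i j) (X' i j) hG (hpos i j))
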